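/- Let Λ be the exterior algebra over a field F (characteristic ≠ 2) on generators a_t, b_t indexed by the tetrahedra t ⊂ {1,...,5}, and let ζ₁,...,ζ₅ ∈ F be pairwise distinct. With v_{12345,1}, ..., v_{12345,5} ∈ Λ¹ defined as in Korepanov's paper (the first three explicitly, the last two by the relations Σ v_j = 0 and Σ ζ_j v_j = 0), one has the equality of degree-3 Grassmann elements: (1/ζ₄₅)·v₁∧v₂∧v₃ = −(1/ζ₃₅)·v₁∧v₂∧v₄ = (1/ζ₁₂)·v₃∧v₄∧v₅, where ζ_{ij} = ζ_i − ζ_j and v_j := v_{12345,j}. -/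

import Mathlib

noncomputable section

variable (F : Type*) [Field F]

/-- Exterior (Grassmann) algebra on generators `a_t, b_t` indexed by tetrahedra
`t ⊂ {1,…,5}` (vertices 0-indexed as `Fin 5`). -/
abbrev Lam := ExteriorAlgebra F ((Bool × Finset (Fin 5)) → F)

/-- generator `a_t` -/
def av (t : Finset (Fin 5)) : Lam F := ExteriorAlgebra.ι F (Pi.single (false, t) 1)
/-- generator `b_t` -/
def bv (t : Finset (Fin 5)) : Lam F := ExteriorAlgebra.ι F (Pi.single (true, t) 1)

variable (ζ : Fin 5 → F)

/-- `v_{12345,1} = ζ₃₄ a₁₂₃₄ − ζ₃₅ a₁₂₃₅ + ζ₄₅ a₁₂₄₅ − ζ₄₅ a₁₃₄₅`. -/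
def v1 : Lam F :=
  (ζ 2 - ζ 3) • av F {0,1,2,3} - (ζ 2 - ζ 4) • av F {0,1,2,4}
    + (ζ 3 - ζ 4) • av F {0,1,3,4} - (ζ 3 - ζ 4) • av F {0,2,3,4}

/-- `v_{12345,2} = ζ₃₄ b₁₂₃₄ − ζ₃₅ b₁₂₃₅ + ζ₄₅ b₁₂₄₅ + ζ₄₅ a₂₃₄₅`. -/
def v2 : Lam F :=
  (ζ 2 - ζ 3) • bv F {0,1,2,3} - (ζ 2 - ζ 4) • bv F {0,1,2,4}
    + (ζ 3 - ζ 4) • bv F {0,1,3,4} + (ζ 3 - ζ 4) • av F {1,2,3,4}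

/-- `v_{12345,3} = −ζ₁₄ a₁₂₃₄ − ζ₂₄ b₁₂₃₄ + ζ₁₅ a₁₂₃₅ + ζ₂₅ b₁₂₃₅ − ζ₄₅ b₁₃₄₅ + ζ₄₅ b₂₃₄₅`. -/
def v3 : Lam F :=
  -((ζ 0 - ζ 3) • av F {0,1,2,3}) - (ζ 1 - ζ 3) • bv F {0,1,2,3}
    + (ζ 0 - ζ 4) • av F {0,1,2,4} + (ζ 1 - ζ 4) • bv F {0,1,2,4}
    - (ζ 3 - ζ 4) • bv F {0,2,3,4} + (ζ 3 - ζ 4) • bv F {1,2,3,4}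

/-- the basis vector underlying `av`/`bv` -/
def gen (b : Bool) (t : Finset (Fin 5)) : (Bool × Finset (Fin 5)) → F :=
  Pi.single (b, t) 1

/-- `v₁` is in the image of `ι`. -/
lemma v1_mem_ι : ∃ w, v1 F ζ = ExteriorAlgebra.ι F w := by
  refine ⟨(ζ 2 - ζ 3) • gen F false {0,1,2,3}
    - (ζ 2 - ζ 4) • gen F false {0,1,2,4}
    + (ζ 3 - ζ 4) • gen F false {0,1,3,4}
    - (ζ 3 - ζ 4) • gen F false {0,2,3,4}, ?_⟩
  simp [v1, av, gen]

/-- `v₂` is in the image of `ι`. -/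
lemma v2_mem_ι : ∃ w, v2 F ζ = ExteriorAlgebra.ι F w := by
  refine ⟨(ζ 2 - ζ 3) • gen F true {0,1,2,3}
    - (ζ 2 - ζ 4) • gen F true {0,1,2,4}
    + (ζ 3 - ζ 4) • gen F true {0,1,3,4}
    + (ζ 3 - ζ 4) • gen F false {1,2,3,4}, ?_⟩
  simp [v2, av, bv, gen]

/-- `v₃` is in the image of `ι`. -/
lemma v3_mem_ι : ∃ w, v3 F ζ = ExteriorAlgebra.ι F w := by
  refine ⟨-((ζ 0 - ζ 3) • gen F false {0,1,2,3})
    - (ζ 1 - ζ 3) • gen F true {0,1,2,3}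
    + (ζ 0 - ζ 4) • gen F false {0,1,2,4}
    + (ζ 1 - ζ 4) • gen F true {0,1,2,4}
    - (ζ 3 - ζ 4) • gen F true {0,2,3,4}
    + (ζ 3 - ζ 4) • gen F true {1,2,3,4}, ?_⟩
  simp [v3, av, bv, gen]

set_option maxHeartbeats 1000000 in
/-- Remark 3 of the paper: with `v₄, v₅` determined by the relations
`v₁+v₂+v₃+v₄+v₅ = 0` and `ζ₁v₁+⋯+ζ₅v₅ = 0`, the degree-3 Grassmann elements agree:
`(1/ζ₄₅) v₁v₂v₃ = −(1/ζ₃₅) v₁v₂v₄ = (1/ζ₁₂) v₃v₄v₅`. -/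
theorem weight_independent_of_triple (hchar : (2 : F) ≠ 0)
    (hζ : Function.Injective ζ) (v4 v5 : Lam F)
    (hsum : v1 F ζ + v2 F ζ + v3 F ζ + v4 + v5 = 0)
    (hzsum : ζ 0 • v1 F ζ + ζ 1 • v2 F ζ + ζ 2 • v3 F ζ + ζ 3 • v4 + ζ 4 • v5 = 0) :
    (ζ 3 - ζ 4)⁻¹ • (v1 F ζ * v2 F ζ * v3 F ζ)
      = -((ζ 2 - ζ 4)⁻¹ • (v1 F ζ * v2 F ζ * v4)) ∧
    (ζ 3 - ζ 4)⁻¹ • (v1 F ζ * v2 F ζ * v3 F ζ)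
      = (ζ 0 - ζ 1)⁻¹ • (v3 F ζ * v4 * v5) := by
  obtain ⟨p, hp⟩ := v1_mem_ι F ζ
  obtain ⟨q, hq⟩ := v2_mem_ι F ζ
  obtain ⟨r, hr⟩ := v3_mem_ι F ζ
  set V1 := v1 F ζ with hV1
  set V2 := v2 F ζ with hV2
  set V3 := v3 F ζ with hV3
  -- square-zero and anticommutation relations
  have sq1 : V1 * V1 = 0 := by rw [hp]; exact ExteriorAlgebra.ι_sq_zero p
  have sq2 : V2 * V2 = 0 := by rw [hq]; exact ExteriorAlgebra.ι_sq_zero q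
  have sq3 : V3 * V3 = 0 := by rw [hr]; exact ExteriorAlgebra.ι_sq_zero r
  have sw12 : V2 * V1 = -(V1 * V2) := by
    rw [hp, hq]; exact eq_neg_of_add_eq_zero_left (ExteriorAlgebra.ι_add_mul_swap q p)
  have sw13 : V3 * V1 = -(V1 * V3) := by
    rw [hp, hr]; exact eq_neg_of_add_eq_zero_left (ExteriorAlgebra.ι_add_mul_swap r p)
  have sw23 : V3 * V2 = -(V2 * V3) := by
    rw [hq, hr]; exact eq_neg_of_add_eq_zero_left (ExteriorAlgebra.ι_add_mul_swap r q)
  -- triple products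
  have t121 : V1 * V2 * V1 = 0 := by
    rw [mul_assoc, sw12, mul_neg, ← mul_assoc, sq1, zero_mul, neg_zero]
  have t122 : V1 * V2 * V2 = 0 := by rw [mul_assoc, sq2, mul_zero]
  have t311 : V3 * V1 * V1 = 0 := by rw [mul_assoc, sq1, mul_zero]
  have t322 : V3 * V2 * V2 = 0 := by rw [mul_assoc, sq2, mul_zero]
  have t312 : V3 * V1 * V2 = V1 * V2 * V3 := by
    rw [sw13, neg_mul, mul_assoc, sw23, mul_neg, neg_neg, ← mul_assoc]
  have t321 : V3 * V2 * V1 = -(V1 * V2 * V3) := by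
    rw [sw23, neg_mul, mul_assoc, sw13, mul_neg, neg_neg, ← mul_assoc, sw12, neg_mul]
  have t313 : V3 * V1 * V3 = 0 := by
    rw [sw13, neg_mul, mul_assoc, sq3, mul_zero, neg_zero]
  have t323 : V3 * V2 * V3 = 0 := by
    rw [sw23, neg_mul, mul_assoc, sq3, mul_zero, neg_zero]
  -- nonvanishing of the differences
  have h34 : ζ 3 - ζ 4 ≠ 0 := sub_ne_zero.2 (hζ.ne (by decide))
  have h24 : ζ 2 - ζ 4 ≠ 0 := sub_ne_zero.2 (hζ.ne (by decide))
  have h01 : ζ 0 - ζ 1 ≠ 0 := sub_ne_zero.2 (hζ.ne (by decide))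
  -- solve for v4 and v5
  have h4 : (ζ 3 - ζ 4) • v4 = (ζ 4 - ζ 0) • V1 + (ζ 4 - ζ 1) • V2 + (ζ 4 - ζ 2) • V3 := by
    linear_combination (norm := module) hzsum - ζ 4 • hsum
  have h5 : (ζ 3 - ζ 4) • v5 = -((ζ 3 - ζ 0) • V1 + (ζ 3 - ζ 1) • V2 + (ζ 3 - ζ 2) • V3) := by
    linear_combination (norm := module) ζ 3 • hsum - hzsum
  set x := V1 * V2 * V3 with hx
  -- first identity, scaled
  have E1 : (ζ 3 - ζ 4) • (V1 * V2 * v4) = (ζ 4 - ζ 2) • x := by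
    calc (ζ 3 - ζ 4) • (V1 * V2 * v4) = V1 * V2 * ((ζ 3 - ζ 4) • v4) := (mul_smul_comm _ _ _).symm
    _ = V1 * V2 * ((ζ 4 - ζ 0) • V1 + (ζ 4 - ζ 1) • V2 + (ζ 4 - ζ 2) • V3) := by rw [h4]
    _ = (ζ 4 - ζ 2) • x := by
        simp only [mul_add, mul_smul_comm, ← hx]
        rw [t121, t122]
        simp
  -- second identity, scaled
  have E2 : (ζ 3 - ζ 4) • ((ζ 3 - ζ 4) • (V3 * v4 * v5)) = ((ζ 3 - ζ 4) * (ζ 0 - ζ 1)) • x := by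
    have step : (ζ 3 - ζ 4) • ((ζ 3 - ζ 4) • (V3 * v4 * v5))
        = (V3 * ((ζ 3 - ζ 4) • v4)) * ((ζ 3 - ζ 4) • v5) := by
      simp [smul_mul_assoc, mul_smul_comm]
    rw [step, h4, h5]
    simp only [mul_add, mul_neg, neg_mul, add_mul, mul_smul_comm, smul_mul_assoc, smul_smul,
      smul_neg, ← mul_assoc, t311, t312, t313, t321, t322, t323, sq3, zero_mul, mul_zero]
    simp only [smul_zero, neg_zero, add_zero, zero_add, smul_neg, neg_neg, neg_add_rev,
      smul_smul]
    rw [← neg_smul, ← add_smul]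
    congr 1
    ring
  have E2' : (ζ 3 - ζ 4) • (V3 * v4 * v5) = (ζ 0 - ζ 1) • x := by
    have h := E2
    rw [mul_smul] at h
    exact smul_right_injective (Lam F) h34 h
  -- deduce unscaled product formulas
  have hv4x : V1 * V2 * v4 = (ζ 3 - ζ 4)⁻¹ • ((ζ 4 - ζ 2) • x) := by
    rw [← E1, inv_smul_smul₀ h34]
  have hv45x : V3 * v4 * v5 = (ζ 3 - ζ 4)⁻¹ • ((ζ 0 - ζ 1) • x) := by
    rw [← E2', inv_smul_smul₀ h34]
  constructor
  · rw [hv4x, smul_smul, smul_smul, ← neg_smul]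
    congr 1
    field_simp
    ring
  · rw [hv45x, smul_smul, smul_smul]
    congr 1
    field_simp

end
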